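/- Let g be an N×N complex matrix with eigenvalues p₁,…,p_N, and for a partition λ = (λ₁ ≥ … ≥ λ_N ≥ 0) define the character χ_λ(g) = det(p_j^{λ_i + N − i}) / det(p_j^{N−i}) (for pairwise distinct eigenvalues). Then χ_λ(g − I) = ∑_{μ ⊆ λ} c_{λμ} χ_μ(g), where c_{λμ} = (−1)^{|λ|−|μ|} det_{1≤i,j≤N} binom(λ_i + N − i, μ_j + N − j) and |λ| = ∑ᵢ λᵢ. -/

import Mathlib

open Matrix Finset

/-- Weyl character formula: the Schur polynomial `χ_λ` evaluated at the
eigenvalues `p₁, …, p_N`. -/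
noncomputable def weylChar (N : ℕ) (p : Fin N → ℂ) (l : Fin N → ℕ) : ℂ :=
  (Matrix.of fun i j : Fin N => p j ^ (l i + (N - 1 - i.val))).det /
    (Matrix.of fun i j : Fin N => p j ^ (N - 1 - i.val)).det
open Matrix Finset

lemma strictAnti_gap {N : ℕ} {g : Fin N → ℕ} (hg : StrictAnti g) :
    ∀ d : ℕ, ∀ i j : Fin N, i.val + d = j.val → g j + d ≤ g i := by
  intro d
  induction d with
  | zero =>
    intro i j h
    have : i = j := Fin.ext (by omega)
    subst this; omega
  | succ d ih =>
    intro i j h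
    have hjpos : 0 < j.val := by omega
    have hj' : j.val - 1 < N := by omega
    have h1 : g j < g ⟨j.val - 1, hj'⟩ := hg (by simp [Fin.lt_def]; omega)
    have h2 : g ⟨j.val - 1, hj'⟩ + d ≤ g i := ih i ⟨j.val - 1, hj'⟩ (by simp; omega)
    omega

lemma pigeonhole_perm {N : ℕ} {m a : Fin N → ℕ} (hm : Antitone m) (ha : Antitone a)
    (σ : Equiv.Perm (Fin N)) {i0 : Fin N} (h : a i0 < m i0) :
    ∃ i, a i < m (σ i) := by
  by_contra hc
  push_neg at hc
  have key : ∀ j : Fin N, j ≤ i0 → σ⁻¹ j < i0 := by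
    intro j hj
    by_contra hj'
    push_neg at hj'
    have h1 : m (σ (σ⁻¹ j)) ≤ a (σ⁻¹ j) := hc _
    rw [show σ (σ⁻¹ j) = j from Equiv.apply_symm_apply σ j] at h1
    have h2 : m i0 ≤ m j := hm hj
    have h3 : a (σ⁻¹ j) ≤ a i0 := ha hj'
    omega
  have hcard := Finset.card_le_card_of_injOn (fun j => σ⁻¹ j)
      (fun j hj => Finset.mem_Iio.mpr (key j (Finset.mem_Iic.mp hj)))
      (fun x _ y _ hxy => (Equiv.injective σ⁻¹) hxy)
  rw [Fin.card_Iic, Fin.card_Iio] at hcard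
  omega

lemma sub_one_pow_eq (x : ℂ) (a Mb : ℕ) (ha : a ≤ Mb) :
    (x - 1) ^ a = ∑ b : Fin (Mb+1), ((a.choose (b:ℕ) : ℂ) * (-1)^(a - (b:ℕ))) * x ^ (b:ℕ) := by
  have h1 : (x - 1)^a = ∑ b ∈ range (a+1), ((a.choose b : ℂ) * (-1)^(a - b)) * x ^ b := by
    have h := add_pow x (-1 : ℂ) a
    rw [show x + (-1 : ℂ) = x - 1 by ring] at h
    rw [h]
    exact Finset.sum_congr rfl fun b _ => by ring
  rw [h1, Fin.sum_univ_eq_sum_range (fun b => ((a.choose b : ℂ) * (-1)^(a - b)) * x ^ b) (Mb+1)]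
  exact Finset.sum_subset (by intro b hb; simp at hb ⊢; omega)
    (by intro b hb hb'; simp at hb hb'; rw [Nat.choose_eq_zero_of_lt (by omega)]; simp)

lemma stepA (N : ℕ) (p : Fin N → ℂ) (a : Fin N → ℕ) (Mb : ℕ) (ha : ∀ i, a i ≤ Mb) :
    (Matrix.of fun i j : Fin N => (p j - 1) ^ (a i)).det
      = ∑ r : Fin N → Fin (Mb+1),
          (∏ i, ((a i).choose (r i : ℕ) : ℂ) * (-1)^(a i - (r i : ℕ))) *
            (Matrix.of fun i j : Fin N => p j ^ ((r i : ℕ))).det := by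
  classical
  have hrow : (Matrix.of fun i j : Fin N => (p j - 1) ^ (a i))
      = Matrix.of (fun i => ∑ b : Fin (Mb+1),
          (((a i).choose (b:ℕ) : ℂ) * (-1)^(a i - (b:ℕ))) • fun j => p j ^ (b:ℕ)) := by
    ext i j
    simp only [Matrix.of_apply, Finset.sum_apply, Pi.smul_apply, smul_eq_mul]
    exact sub_one_pow_eq (p j) (a i) Mb (ha i)
  rw [hrow]
  have hdet : ∀ v : Fin N → (Fin N → ℂ), (Matrix.of v).det
      = (Matrix.detRowAlternating (R := ℂ) (n := Fin N)).toMultilinearMap v := fun _ => rfl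
  rw [hdet]
  rw [MultilinearMap.map_sum]
  refine Finset.sum_congr rfl fun r _ => ?_
  rw [MultilinearMap.map_smul_univ]
  rw [← hdet]
  simp [smul_eq_mul]
lemma stepB1 (N : ℕ) (p : Fin N → ℂ) (a b : Fin N → ℕ) (_hb : ∀ i, b i ≤ a i) :
    (-1:ℂ)^(∑ i, a i - ∑ i, b i) * (Matrix.of fun i j : Fin N => ((a i).choose (b j) : ℂ)).det
        * (Matrix.of fun i j : Fin N => p j ^ (b i)).det
      = ∑ σ : Equiv.Perm (Fin N),
          (∏ i, ((a i).choose (b (σ i)) : ℂ) * (-1)^(a i - b (σ i))) *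
            (Matrix.of fun i j : Fin N => p j ^ (b (σ i))).det := by
  classical
  have hperm : ∀ σ : Equiv.Perm (Fin N),
      (Matrix.of fun i j : Fin N => p j ^ (b (σ i))).det
        = (Equiv.Perm.sign σ : ℤ) * (Matrix.of fun i j : Fin N => p j ^ (b i)).det := by
    intro σ
    have : (Matrix.of fun i j : Fin N => p j ^ (b (σ i)))
        = (Matrix.of fun i j : Fin N => p j ^ (b i)).submatrix σ id := rfl
    rw [this, Matrix.det_permute]
  have hbin : (Matrix.of fun i j : Fin N => ((a i).choose (b j) : ℂ)).det
      = ∑ σ : Equiv.Perm (Fin N),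
          ((Equiv.Perm.sign σ : ℤ) : ℂ) * ∏ i, ((a i).choose (b (σ i)) : ℂ) := by
    rw [← Matrix.det_transpose, Matrix.det_apply']
    refine Finset.sum_congr rfl fun σ _ => ?_
    simp [Matrix.transpose_apply]
  rw [hbin, Finset.mul_sum, Finset.sum_mul]
  refine Finset.sum_congr rfl fun σ _ => ?_
  rw [hperm σ]
  by_cases hcase : ∀ i, b (σ i) ≤ a i
  · have hprod : (∏ i, ((a i).choose (b (σ i)) : ℂ) * (-1:ℂ)^(a i - b (σ i)))
        = (∏ i, ((a i).choose (b (σ i)) : ℂ)) * (-1:ℂ)^(∑ i, (a i - b (σ i))) := by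
      rw [Finset.prod_mul_distrib, Finset.prod_pow_eq_pow_sum]
    have hsum : ∑ i, (a i - b (σ i)) = ∑ i, a i - ∑ i, b i := by
      rw [Finset.sum_tsub_distrib _ (fun i _ => hcase i)]
      congr 1
      exact Equiv.sum_comp σ b
    rw [hprod, hsum]
    ring
  · push_neg at hcase
    obtain ⟨i, hi⟩ := hcase
    have h0 : ((a i).choose (b (σ i)) : ℂ) = 0 := by
      rw [Nat.choose_eq_zero_of_lt hi]; simp
    rw [Finset.prod_eq_zero (Finset.mem_univ i) h0,
        Finset.prod_eq_zero (Finset.mem_univ i) (by rw [h0]; ring)]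
    ring
lemma core (N : ℕ) (p : Fin N → ℂ) (l : Fin N → ℕ) (hl : Antitone l) :
    (Matrix.of fun i j : Fin N => (p j - 1) ^ (l i + (N - 1 - i.val))).det
      = ∑ μ : (∀ i : Fin N, Fin (l i + 1)),
          if Antitone (fun i => ((μ i : ℕ))) then
            (-1 : ℂ) ^ ((∑ i, l i) - ∑ i, ((μ i : ℕ))) *
            (Matrix.of fun i j : Fin N =>
              ((l i + (N - 1 - i.val)).choose ((μ j : ℕ) + (N - 1 - j.val)) : ℂ)).det *
            (Matrix.of fun i j : Fin N => p j ^ ((μ i : ℕ) + (N - 1 - i.val))).det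
          else 0 := by
  classical
  set a : Fin N → ℕ := fun i => l i + (N - 1 - i.val) with ha_def
  set Mb : ℕ := (∑ i, l i) + N with hMb_def
  have hl_le : ∀ i, l i ≤ ∑ j, l j := fun i =>
    Finset.single_le_sum (fun j _ => Nat.zero_le _) (Finset.mem_univ i)
  have ha_le : ∀ i, a i ≤ Mb := fun i => by
    have h1 := hl_le i
    simp only [ha_def, hMb_def]
    omega
  have ha_anti : Antitone a := by
    intro i j hij
    have h1 : l j ≤ l i := hl hij
    have h2 : i.val ≤ j.val := hij
    simp only [ha_def]
    omega
  set bf : (∀ i : Fin N, Fin (l i + 1)) → (Fin N → ℕ) :=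
    fun μ i => (μ i : ℕ) + (N - 1 - i.val) with hbf_def
  have hbf_le : ∀ μ i, bf μ i ≤ a i := fun μ i => by
    have := (μ i).isLt
    simp only [hbf_def, ha_def]
    omega
  have hbf_strict : ∀ μ, Antitone (fun i => ((μ i : ℕ))) → StrictAnti (bf μ) := by
    intro μ hμ i j hij
    have h1 : (μ j : ℕ) ≤ (μ i : ℕ) := hμ hij.le
    have h2 : i.val < j.val := hij
    have h3 : j.val < N := j.isLt
    simp only [hbf_def]
    omega
  -- the set of pairs and the image
  set S : Finset ((∀ i : Fin N, Fin (l i + 1)) × Equiv.Perm (Fin N)) :=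
    (Finset.univ.filter (fun μ => Antitone (fun i => ((μ i : ℕ))))) ×ˢ Finset.univ with hS_def
  have hΦmem : ∀ (μ : ∀ i : Fin N, Fin (l i + 1)) (σ : Equiv.Perm (Fin N)) (i : Fin N),
      bf μ (σ i) < Mb + 1 := fun μ σ i => by
    have h1 := hbf_le μ (σ i)
    have h2 := ha_le (σ i)
    omega
  set Φ : ((∀ i : Fin N, Fin (l i + 1)) × Equiv.Perm (Fin N)) → (Fin N → Fin (Mb+1)) :=
    fun x i => ⟨bf x.1 (x.2 i), hΦmem x.1 x.2 i⟩ with hΦ_def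
  set G : Finset (Fin N → Fin (Mb+1)) := S.image Φ with hG_def
  -- Step A
  rw [stepA N p a Mb ha_le]
  -- RHS: sum over filtered μ
  rw [← Finset.sum_filter]
  -- per-μ expansion via stepB1
  have hperμ : ∀ μ ∈ Finset.univ.filter (fun μ : (∀ i : Fin N, Fin (l i + 1)) =>
      Antitone (fun i => ((μ i : ℕ)))),
      (-1 : ℂ) ^ ((∑ i, l i) - ∑ i, ((μ i : ℕ))) *
        (Matrix.of fun i j : Fin N => ((a i).choose (bf μ j) : ℂ)).det *
        (Matrix.of fun i j : Fin N => p j ^ (bf μ i)).det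
      = ∑ σ : Equiv.Perm (Fin N),
          (∏ i, ((a i).choose (bf μ (σ i)) : ℂ) * (-1)^(a i - bf μ (σ i))) *
            (Matrix.of fun i j : Fin N => p j ^ (bf μ (σ i))).det := by
    intro μ _
    have hexp : ((∑ i, l i) - ∑ i, ((μ i : ℕ))) = (∑ i, a i - ∑ i, bf μ i) := by
      have h1 : ∑ i, a i = (∑ i, l i) + ∑ i : Fin N, (N - 1 - i.val) := by
        simp only [ha_def]; rw [Finset.sum_add_distrib]
      have h2 : ∑ i, bf μ i = (∑ i, ((μ i : ℕ))) + ∑ i : Fin N, (N - 1 - i.val) := by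
        simp only [hbf_def]; rw [Finset.sum_add_distrib]
      omega
    rw [hexp]
    exact stepB1 N p a (bf μ) (hbf_le μ)
  rw [Finset.sum_congr rfl hperμ]
  -- turn into a sum over pairs
  rw [← Finset.sum_product' (s := Finset.univ.filter _) (t := Finset.univ)]
  -- identify with sum over the image G
  have himage : ∑ x ∈ S,
      ((∏ i, ((a i).choose (bf x.1 (x.2 i)) : ℂ) * (-1)^(a i - bf x.1 (x.2 i))) *
        (Matrix.of fun i j : Fin N => p j ^ (bf x.1 (x.2 i))).det)
      = ∑ r ∈ G,
        ((∏ i, ((a i).choose ((r i : ℕ)) : ℂ) * (-1)^(a i - (r i : ℕ))) *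
          (Matrix.of fun i j : Fin N => p j ^ ((r i : ℕ))).det) := by
    rw [hG_def]
    rw [Finset.sum_image ?_]
    case _ =>
      -- injectivity
      intro x hx y hy hxy
      obtain ⟨μ, σ⟩ := x
      obtain ⟨μ', σ'⟩ := y
      rw [hS_def, Finset.mem_coe, Finset.mem_product, Finset.mem_filter] at hx hy
      have hμa := hx.1.2
      have hμ'a := hy.1.2
      have hμs := hbf_strict μ hμa
      have hμ's := hbf_strict μ' hμ'a
      have hval : ∀ i, bf μ (σ i) = bf μ' (σ' i) := fun i =>
        congrArg Fin.val (congrFun hxy i)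
      have hcomp : bf μ ∘ σ = bf μ' ∘ σ' := funext hval
      have hrange : Set.range (bf μ) = Set.range (bf μ') := by
        calc Set.range (bf μ) = Set.range (bf μ ∘ σ) := (σ.surjective.range_comp _).symm
          _ = Set.range (bf μ' ∘ σ') := by rw [hcomp]
          _ = Set.range (bf μ') := σ'.surjective.range_comp _
      have hbb : bf μ = bf μ' := (StrictAnti.range_inj hμs hμ's).mp hrange
      have hμμ : μ = μ' := by
        funext i
        have := congrFun hbb i
        simp only [hbf_def] at this
        exact Fin.ext (by omega)
      subst hμμ
      have hσσ : σ = σ' := by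
        apply Equiv.ext
        intro i
        apply hμs.injective
        rw [← hbb] at hval
        exact hval i
      rw [hσσ]
  rw [himage]
  -- finally: G-sum equals the full sum
  symm
  apply Finset.sum_subset (Finset.subset_univ G)
  -- vanishing off G
  intro r _ hrG
  by_contra hF0
  have hprodne : (∏ i, ((a i).choose ((r i : ℕ)) : ℂ) * (-1)^(a i - (r i : ℕ))) ≠ 0 :=
    fun h => hF0 (by rw [h]; ring)
  have hdetne : (Matrix.of fun i j : Fin N => p j ^ ((r i : ℕ))).det ≠ 0 :=
    fun h => hF0 (by rw [h]; ring)
  set rv : Fin N → ℕ := fun i => (r i : ℕ) with hrv_def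
  have hinjv : Function.Injective rv := by
    by_contra hni
    rw [Function.not_injective_iff] at hni
    obtain ⟨i, j, hij, hne⟩ := hni
    have hij' : (r i : ℕ) = (r j : ℕ) := hij
    exact hdetne (Matrix.det_zero_of_row_eq hne (by
      funext k
      simp only [Matrix.of_apply]
      rw [hij']))
  have hle : ∀ i, rv i ≤ a i := by
    intro i
    by_contra hgt
    push_neg at hgt
    exact hprodne (Finset.prod_eq_zero (Finset.mem_univ i)
      (by rw [Nat.choose_eq_zero_of_lt hgt]; simp))
  -- sort
  set τ : Equiv.Perm (Fin N) := Tuple.sort rv with hτ_def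
  have hg : StrictMono (rv ∘ τ) :=
    (Tuple.monotone_sort rv).strictMono_of_injective (hinjv.comp τ.injective)
  set m : Fin N → ℕ := fun i => rv (τ (Fin.rev i)) with hm_def
  have hmanti : StrictAnti m := by
    intro i j hij
    exact hg (show Fin.rev j < Fin.rev i from Fin.rev_lt_rev.mpr hij)
  set π : Equiv.Perm (Fin N) := τ.symm.trans (Fin.revPerm) with hπ_def
  have hπ : ∀ i, m (π i) = rv i := by
    intro i
    simp only [hm_def, hπ_def, Equiv.trans_apply, Fin.revPerm_apply, Fin.rev_rev]
    rw [Equiv.apply_symm_apply]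
  have hma : ∀ i, m i ≤ a i := by
    by_contra hcon
    push_neg at hcon
    obtain ⟨i0, hi0⟩ := hcon
    obtain ⟨i, hi⟩ := pigeonhole_perm hmanti.antitone ha_anti π hi0
    rw [hπ i] at hi
    exact absurd (hle i) (by omega)
  have hge : ∀ i : Fin N, N - 1 - i.val ≤ m i := by
    intro i
    have hN : i.val < N := i.isLt
    have := strictAnti_gap hmanti ((N-1) - i.val) i ⟨N-1, by omega⟩ (by simp; omega)
    omega
  set μ : ∀ i : Fin N, Fin (l i + 1) := fun i =>
    ⟨m i - (N - 1 - i.val), by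
      have h1 := hma i
      simp only [ha_def] at h1
      omega⟩ with hμ_def
  have hbfμ : ∀ i, bf μ i = m i := by
    intro i
    have := hge i
    simp only [hbf_def, hμ_def]
    omega
  have hμanti : Antitone (fun i => ((μ i : ℕ))) := by
    intro i j hij
    have hij' : i.val ≤ j.val := hij
    have gap := strictAnti_gap hmanti (j.val - i.val) i j (by omega)
    have hjN : j.val < N := j.isLt
    simp only [hμ_def]
    omega
  apply hrG
  rw [hG_def]
  apply Finset.mem_image.mpr
  refine ⟨(μ, π), ?_, ?_⟩
  · rw [hS_def, Finset.mem_product, Finset.mem_filter]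
    exact ⟨⟨Finset.mem_univ _, hμanti⟩, Finset.mem_univ _⟩
  · funext i
    apply Fin.ext
    simp only [hΦ_def]
    rw [hbfμ (π i), hπ i]
lemma det_desc (N : ℕ) (q : Fin N → ℂ) :
    (Matrix.of fun i j : Fin N => q j ^ (N - 1 - i.val)).det
      = ((Equiv.Perm.sign (Fin.revPerm : Equiv.Perm (Fin N)) : ℤ) : ℂ) *
        ∏ i : Fin N, ∏ j ∈ Finset.Ioi i, (q j - q i) := by
  have h : (Matrix.of fun i j : Fin N => q j ^ (N - 1 - i.val))ᵀ
      = (Matrix.vandermonde q).submatrix id Fin.revPerm := by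
    ext i j
    simp [Matrix.vandermonde, Fin.val_rev]
    congr 1
    omega
  rw [← Matrix.det_transpose, h, Matrix.det_permute', Matrix.det_vandermonde]

/-- The character expansion `χ_λ(g - 1) = ∑_{μ ⊆ λ} c_{λμ} χ_μ(g)` with
`c_{λμ} = (-1)^{|λ|-|μ|} det (binom (λᵢ+N-i) (μⱼ+N-j))`. -/
theorem char_expansion
    (N : ℕ) (p : Fin N → ℂ) (hp : Function.Injective p)
    (l : Fin N → ℕ) (hl : Antitone l) :
    weylChar N (fun a => p a - 1) l
      = ∑ μ : (∀ i : Fin N, Fin (l i + 1)),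
          if Antitone (fun i => ((μ i : ℕ))) then
            (-1 : ℂ) ^ ((∑ i, l i) - ∑ i, ((μ i : ℕ))) *
            (Matrix.of fun i j : Fin N =>
              ((l i + (N - 1 - i.val)).choose ((μ j : ℕ) + (N - 1 - j.val)) : ℂ)).det *
            weylChar N p (fun i => (μ i : ℕ))
          else 0 := by
  classical
  unfold weylChar
  simp only []
  have hDD : (Matrix.of fun i j : Fin N => (p j - 1) ^ (N - 1 - i.val)).det
      = (Matrix.of fun i j : Fin N => p j ^ (N - 1 - i.val)).det := by
    rw [det_desc, det_desc]
    congr 1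
    exact Finset.prod_congr rfl fun i _ => Finset.prod_congr rfl fun j _ => by ring
  have hD0 : (Matrix.of fun i j : Fin N => p j ^ (N - 1 - i.val)).det ≠ 0 := by
    rw [det_desc]
    apply mul_ne_zero
    · rcases Int.units_eq_one_or (Equiv.Perm.sign (Fin.revPerm : Equiv.Perm (Fin N))) with h | h <;>
        rw [h] <;> norm_num
    · rw [Finset.prod_ne_zero_iff]
      intro i _
      rw [Finset.prod_ne_zero_iff]
      intro j hj
      have hij : i < j := Finset.mem_Ioi.mp hj
      exact sub_ne_zero.mpr fun h => absurd (hp h) hij.ne'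
  rw [hDD, core N p l hl, Finset.sum_div]
  refine Finset.sum_congr rfl fun μ _ => ?_
  split_ifs with h
  · rw [mul_div_assoc]
  · exact zero_div _
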